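/- arXiv:2101.00644 — 2 statements merged into one kernel-verified Lean document; each statement's English description precedes it below -/
import Mathlib

section
/- Let A_t be an attractor of the asynchronous transition system TS of a Boolean network BN, and let C = (𝕆,𝟙) be a control. Then C is a temporary target control for A_t (i.e., for every state s ∈ S and every fair infinite path ρ = ρ_0 → ρ_1 → … of TS|_C starting from ρ_0 = C(s), there exists t_0 ≥ 0 such that for all t ≥ t_0, every fair infinite path of TS starting from ρ_t eventually reaches a state of A_t) if and only if bas^S_{TS}(A_t) ∩ S|_C ≠ ∅ and C(S) ⊆ bas^S_{TS|_C}(bas^S_{TS}(A_t) ∩ S|_C), where bas^S_{TS|_C}(W) denotes the set of states s ∈ S|_C such that reach_{TS|_C}(s) ∩ W ≠ ∅ and reach_{TS|_C}(s) ∩ A' = ∅ for every attractor A' of TS|_C with A' ∩ W = ∅. -/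
/-- A state of a Boolean network with `n` variables. -/
abbrev BNState (n : ℕ) := Fin n → Bool

/-- One asynchronous transition of the Boolean network with functions `F`:
either exactly one variable `i` changes and takes the value `F i s = !(s i)`,
or the state stays the same and some variable `i` satisfies `F i s = s i`. -/
def Step {n : ℕ} (F : Fin n → BNState n → Bool) (s s' : BNState n) : Prop :=
  (∃ i, s' i = F i s ∧ s' i = !(s i) ∧ ∀ j, j ≠ i → s' j = s j) ∨
  (s' = s ∧ ∃ i, F i s = s i)

/-- The set of states reachable from `s` by a (possibly empty) sequence of transitions. -/
def reach {n : ℕ} (F : Fin n → BNState n → Bool) (s : BNState n) : Set (BNState n) :=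
  {s' | Relation.ReflTransGen (Step F) s s'}

/-- An attractor: a minimal non-empty set `A` of states with `reach F s = A` for every `s ∈ A`. -/
def IsAttractor {n : ℕ} (F : Fin n → BNState n → Bool) (A : Set (BNState n)) : Prop :=
  A.Nonempty ∧ (∀ s ∈ A, reach F s = A) ∧
  ∀ B, B ⊆ A → B.Nonempty → (∀ s ∈ B, reach F s = B) → B = A

/-- An infinite path of the transition system. -/
def IsPath {n : ℕ} (F : Fin n → BNState n → Bool) (π : ℕ → BNState n) : Prop :=
  ∀ k, Step F (π k) (π (k + 1))

/-- A state occurs infinitely often in the sequence `π`. -/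
def InfOften {n : ℕ} (π : ℕ → BNState n) (x : BNState n) : Prop :=
  ∀ N, ∃ k, N ≤ k ∧ π k = x

/-- Fairness: every possible next state of every state occurring infinitely often
also occurs infinitely often. -/
def Fair {n : ℕ} (F : Fin n → BNState n → Bool) (π : ℕ → BNState n) : Prop :=
  ∀ x, InfOften π x → ∀ y, Step F x y → InfOften π y

/-- The weak basin of `A`: states from which `A` is reachable. -/
def weakBasin {n : ℕ} (F : Fin n → BNState n → Bool) (A : Set (BNState n)) :
    Set (BNState n) :=
  {s | (reach F s ∩ A).Nonempty}

/-- The strong basin of an attractor `A`: states from which `A` is reachable and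
no other attractor is reachable. -/
def strongBasin {n : ℕ} (F : Fin n → BNState n → Bool) (A : Set (BNState n)) :
    Set (BNState n) :=
  {s | (reach F s ∩ A).Nonempty ∧
       ∀ A', IsAttractor F A' → A' ≠ A → reach F s ∩ A' = ∅}

/-- The application of the control `C = (O, I)` to a state. -/
def applyControl {n : ℕ} (O I : Finset (Fin n)) (s : BNState n) : BNState n :=
  fun i => if i ∈ O then false else if i ∈ I then true else s i

/-- The Boolean functions of the network under control `C = (O, I)`. -/
def ctrlF {n : ℕ} (O I : Finset (Fin n)) (F : Fin n → BNState n → Bool) :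
    Fin n → BNState n → Bool :=
  fun i s => if i ∈ O then false else if i ∈ I then true else F i s

/-- The state space `S|_C` of the network under control `C = (O, I)`. -/
def ctrlSpace {n : ℕ} (O I : Finset (Fin n)) : Set (BNState n) :=
  {s | (∀ i ∈ O, s i = false) ∧ (∀ i ∈ I, s i = true)}

/-- `S'` is a schema with off-set `O`, on-set `I` and don't-care-set `D`. -/
def IsSchema {n : ℕ} (S' : Set (BNState n)) (O I D : Finset (Fin n)) : Prop :=
  Disjoint O I ∧ Disjoint O D ∧ Disjoint I D ∧ O ∪ I ∪ D = Finset.univ ∧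
  S' = {s : BNState n | (∀ i ∈ O, s i = false) ∧ (∀ i ∈ I, s i = true)}

/-- The strong basin, in the transition system with functions `F` and state space `SC`,
of a target set of states `W`: the states of `SC` from which `W` is reachable and
no attractor disjoint from `W` is reachable. -/
def strongBasinSet {n : ℕ} (F : Fin n → BNState n → Bool) (SC W : Set (BNState n)) :
    Set (BNState n) :=
  {s | s ∈ SC ∧ (reach F s ∩ W).Nonempty ∧
       ∀ A', IsAttractor F A' → A' ∩ W = ∅ → reach F s ∩ A' = ∅}

section Basic
variable {n : ℕ} {G : Fin n → BNState n → Bool}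

lemma reach_refl (s : BNState n) : s ∈ reach G s := Relation.ReflTransGen.refl

lemma reach_trans {s t u : BNState n} (h1 : t ∈ reach G s) (h2 : u ∈ reach G t) :
    u ∈ reach G s := Relation.ReflTransGen.trans h1 h2

lemma exists_step (hn : 1 ≤ n) (s : BNState n) : ∃ s', Step G s s' := by
  set i : Fin n := ⟨0, hn⟩
  by_cases h : G i s = s i
  · exact ⟨s, Or.inr ⟨rfl, i, h⟩⟩
  · refine ⟨Function.update s i (G i s), Or.inl ⟨i, ?_, ?_, ?_⟩⟩
    · simp [Function.update]
    · simp only [Function.update_self]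
      cases hsi : s i <;> cases hGi : G i s <;> simp_all
    · intro j hj; simp [Function.update, hj]

lemma path_reach {π : ℕ → BNState n} (hπ : IsPath G π) {k t : ℕ} (h : k ≤ t) :
    π t ∈ reach G (π k) := by
  induction t with
  | zero => have : k = 0 := Nat.le_zero.mp h; subst this; exact reach_refl _
  | succ m ih =>
    rcases Nat.lt_or_ge k (m+1) with h' | h'
    · exact Relation.ReflTransGen.tail (ih (Nat.lt_succ_iff.mp h')) (hπ m)
    · have : k = m + 1 := le_antisymm h h'
      subst this; exact reach_refl _

lemma attractor_reach_eq {A : Set (BNState n)} (hA : IsAttractor G A) {a : BNState n}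
    (ha : a ∈ A) : reach G a = A := hA.2.1 a ha

lemma attractor_eq_of_mem {A A' : Set (BNState n)} (hA : IsAttractor G A)
    (hA' : IsAttractor G A') {u : BNState n} (hu : u ∈ A) (hu' : u ∈ A') : A = A' := by
  rw [← attractor_reach_eq hA hu, ← attractor_reach_eq hA' hu']

/-- Journeys: finite paths as functions. -/
def Journey (G : Fin n → BNState n → Bool) (f : ℕ → BNState n) (m : ℕ) : Prop :=
  ∀ k, k < m → Step G (f k) (f (k+1))

lemma journey_reach {f : ℕ → BNState n} {m : ℕ} (hf : Journey G f m) {j : ℕ} (hj : j ≤ m) :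
    f j ∈ reach G (f 0) := by
  induction j with
  | zero => exact reach_refl _
  | succ i ih =>
    exact Relation.ReflTransGen.tail (ih (le_of_lt (Nat.lt_of_succ_le hj)))
      (hf i (Nat.lt_of_succ_le hj))

lemma reach_iff_journey {s t : BNState n} :
    t ∈ reach G s ↔ ∃ m f, Journey G f m ∧ f 0 = s ∧ f m = t := by
  constructor
  · intro h
    induction h with
    | refl => exact ⟨0, fun _ => s, fun k hk => absurd hk (Nat.not_lt_zero k), rfl, rfl⟩
    | tail hab hbc ih =>
      rename_i b c
      obtain ⟨m, f, hf, hf0, hfm⟩ := ih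
      refine ⟨m + 1, fun k => if k = m + 1 then c else f k, ?_, ?_, ?_⟩
      · intro k hk
        dsimp only
        rcases Nat.lt_or_ge k m with h' | h'
        · rw [if_neg (by omega : ¬ k = m + 1), if_neg (by omega : ¬ k + 1 = m + 1)]
          exact hf k h'
        · have hkm : k = m := by omega
          subst hkm
          rw [if_neg (by omega : ¬ k = k + 1), if_pos rfl, hfm]
          exact hbc
      · show (if (0:ℕ) = m + 1 then c else f 0) = s
        rw [if_neg (by omega : ¬ (0:ℕ) = m + 1)]; exact hf0
      · show (if m + 1 = m + 1 then c else f (m+1)) = c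
        rw [if_pos rfl]
  · rintro ⟨m, f, hf, rfl, rfl⟩
    exact journey_reach hf le_rfl

lemma journey_comp {f g : ℕ → BNState n} {m l : ℕ} (hf : Journey G f m)
    (hg : Journey G g l) (hfg : f m = g 0) :
    ∃ h : ℕ → BNState n, Journey G h (m + l) ∧ (∀ k, k ≤ m → h k = f k) ∧
      (∀ k, h (m + k) = g k) := by
  refine ⟨fun k => if k ≤ m then f k else g (k - m), ?_, ?_, ?_⟩
  · intro k hk
    dsimp only
    rcases Nat.lt_or_ge k m with h' | h'
    · rw [if_pos (le_of_lt h'), if_pos (by omega : k + 1 ≤ m)]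
      exact hf k h'
    · rcases Nat.eq_or_lt_of_le h' with rfl | h''
      · have h1 : ¬ (m + 1 ≤ m) := by omega
        simp only [le_refl, if_true, h1, if_false]
        have : m + 1 - m = 1 := by omega
        rw [this, hfg]
        exact hg 0 (by omega)
      · have h1 : ¬ (k ≤ m) := by omega
        have h2 : ¬ (k + 1 ≤ m) := by omega
        simp only [h1, if_false, h2]
        have e1 : k + 1 - m = (k - m) + 1 := by omega
        rw [e1]
        exact hg (k - m) (by omega)
  · intro k hk; simp only [if_pos hk]
  · intro k
    dsimp only
    rcases Nat.eq_or_lt_of_le (Nat.zero_le k) with rfl | hk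
    · simp [hfg]
    · have h1 : ¬ (m + k ≤ m) := by omega
      simp [h1]

end Basic
section Attr
variable {n : ℕ} {G : Fin n → BNState n → Bool}

lemma isAttractor_of {A : Set (BNState n)} (hne : A.Nonempty)
    (h : ∀ a ∈ A, reach G a = A) : IsAttractor G A := by
  refine ⟨hne, h, fun B hBA hBne hB => ?_⟩
  obtain ⟨b, hb⟩ := hBne
  rw [← hB b hb]
  exact h b (hBA hb)

lemma fair_path_attractor {π : ℕ → BNState n} (hπ : IsPath G π) (hf : Fair G π) :
    ∃ A N, IsAttractor G A ∧ (∀ t, N ≤ t → π t ∈ A) ∧ A ⊆ reach G (π 0) := by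
  set A : Set (BNState n) := {x | InfOften π x} with hA
  have hbnd : ∀ x : BNState n, ∃ N, ¬ InfOften π x → ∀ k, N ≤ k → π k ≠ x := by
    intro x
    by_cases h : InfOften π x
    · exact ⟨0, fun h' => absurd h h'⟩
    · have h' := h
      unfold InfOften at h'
      push_neg at h'
      obtain ⟨N, hN⟩ := h'
      exact ⟨N, fun _ k hk => hN k hk⟩
  choose Nf hNf using hbnd
  set N := Finset.univ.sup Nf with hNdef
  have hevt : ∀ t, N ≤ t → π t ∈ A := by
    intro t ht
    by_contra hc
    exact hNf (π t) hc t (le_trans (Finset.le_sup (Finset.mem_univ (π t))) ht) rfl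
  have hAne : A.Nonempty := ⟨π N, hevt N le_rfl⟩
  have hreach : ∀ x ∈ A, reach G x = A := by
    intro x hx
    apply Set.eq_of_subset_of_subset
    · intro y hy
      induction hy with
      | refl => exact hx
      | tail _ h2 ih => exact hf _ ih _ h2
    · intro y hy
      obtain ⟨k, _, hk⟩ := hx 0
      obtain ⟨t, ht, ht2⟩ := hy k
      rw [← hk, ← ht2]
      exact path_reach hπ ht
  refine ⟨A, N, isAttractor_of hAne hreach, hevt, ?_⟩
  intro x hx
  obtain ⟨t, _, ht⟩ := hx 0
  rw [← ht]
  exact path_reach hπ (Nat.zero_le t)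

lemma exists_attractor_reach (s : BNState n) :
    ∃ A, IsAttractor G A ∧ A ⊆ reach G s := by
  obtain ⟨x, hxR, hxmin⟩ := Set.exists_min_image (reach G s)
    (fun x => (reach G x).ncard) (Set.toFinite _) ⟨s, reach_refl s⟩
  refine ⟨reach G x, isAttractor_of ⟨x, reach_refl x⟩ ?_, fun y hy => reach_trans hxR hy⟩
  intro y hy
  have h1 : reach G y ⊆ reach G x := fun z hz => reach_trans hy hz
  have h2 : y ∈ reach G s := reach_trans hxR hy
  exact Set.eq_of_subset_of_ncard_le h1 (hxmin y h2) (Set.toFinite _)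

end Attr
section FairCons
variable {n : ℕ} {G : Fin n → BNState n → Bool}

lemma journey_tour {A : Set (BNState n)} (hA : IsAttractor G A) (a : BNState n)
    (ha : a ∈ A) (l : List (BNState n)) (hl : ∀ x ∈ l, x ∈ A) :
    ∃ m f, Journey G f m ∧ f 0 = a ∧ f m ∈ A ∧ (∀ x ∈ l, ∃ j, j ≤ m ∧ f j = x) ∧
      (∀ j, j ≤ m → f j ∈ A) := by
  induction l generalizing a with
  | nil =>
    exact ⟨0, fun _ => a, fun k hk => absurd hk (Nat.not_lt_zero k), rfl, ha,
      fun x hx => absurd hx List.not_mem_nil, fun j hj => by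
        have : j = 0 := Nat.le_zero.mp hj; subst this; exact ha⟩
  | cons x l ih =>
    have hx : x ∈ A := hl x List.mem_cons_self
    have hax : x ∈ reach G a := by rw [attractor_reach_eq hA ha]; exact hx
    obtain ⟨m1, f1, hf1, hf10, hf1m⟩ := reach_iff_journey.mp hax
    obtain ⟨m2, f2, hf2, hf20, hf2m, hf2all, hf2A⟩ :=
      ih x hx (fun y hy => hl y (List.mem_cons_of_mem x hy))
    obtain ⟨h, hh, hh1, hh2⟩ := journey_comp hf1 hf2 (by rw [hf1m, hf20])
    have hh1A : ∀ j, j ≤ m1 → h j ∈ A := by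
      intro j hj
      rw [hh1 j hj]
      have := journey_reach hf1 hj
      rw [hf10, attractor_reach_eq hA ha] at this
      exact this
    refine ⟨m1 + m2, h, hh, by rw [hh1 0 (Nat.zero_le _), hf10], ?_, ?_, ?_⟩
    · rw [hh2 m2]; exact hf2m
    · intro y hy
      rcases List.mem_cons.mp hy with rfl | hy'
      · exact ⟨m1, by omega, by rw [hh1 m1 le_rfl, hf1m]⟩
      · obtain ⟨j, hj, hfj⟩ := hf2all y hy'
        exact ⟨m1 + j, by omega, by rw [hh2 j, hfj]⟩
    · intro j hj
      rcases le_or_gt j m1 with h' | h'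
      · exact hh1A j h'
      · have : j = m1 + (j - m1) := by omega
        rw [this, hh2]
        exact hf2A _ (by omega)

lemma exists_loop (hn : 1 ≤ n) {A : Set (BNState n)} (hA : IsAttractor G A)
    {a : BNState n} (ha : a ∈ A) :
    ∃ L f, 1 ≤ L ∧ Journey G f L ∧ f 0 = a ∧ f L = a ∧
      (∀ a' ∈ A, ∃ j, j < L ∧ f j = a') ∧ (∀ j, j ≤ L → f j ∈ A) := by
  obtain ⟨b, hb⟩ := exists_step (G := G) hn a
  have hbA : b ∈ A := by
    rw [← attractor_reach_eq hA ha]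
    exact Relation.ReflTransGen.single hb
  -- tour from b through all of A
  set l := (Set.toFinite A).toFinset.toList with hl
  have hlmem : ∀ x ∈ A, x ∈ l := by
    intro x hx
    rw [hl, Finset.mem_toList, Set.Finite.mem_toFinset]
    exact hx
  have hlmem' : ∀ x ∈ l, x ∈ A := by
    intro x hx
    rw [hl, Finset.mem_toList, Set.Finite.mem_toFinset] at hx
    exact hx
  obtain ⟨m2, f2, hf2, hf20, hf2m, hf2all, hf2A⟩ := journey_tour hA b hbA l hlmem'
  -- back from f2 m2 to a
  have hback : a ∈ reach G (f2 m2) := by rw [attractor_reach_eq hA (hf2A m2 le_rfl)]; exact ha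
  obtain ⟨m3, f3, hf3, hf30, hf3m⟩ := reach_iff_journey.mp hback
  have hf3A : ∀ j, j ≤ m3 → f3 j ∈ A := by
    intro j hj
    have := journey_reach hf3 hj
    rw [hf30, attractor_reach_eq hA (hf2A m2 le_rfl)] at this
    exact this
  -- compose: step a→b , then f2, then f3
  have hstep : Journey G (fun k => if k = 0 then a else b) 1 := by
    intro k hk
    have : k = 0 := by omega
    subst this
    simpa using hb
  obtain ⟨g, hg, hg1, hg2⟩ := journey_comp hstep hf2 (by simpa using hf20.symm)
  obtain ⟨h, hh, hh1, hh2⟩ := journey_comp hg (f := g) hf3 (by rw [hg2 m2, hf30])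
  have hgA : ∀ j, j ≤ 1 + m2 → g j ∈ A := by
    intro j hj
    rcases le_or_gt j 0 with h' | h'
    · have : j = 0 := by omega
      subst this
      rw [hg1 0 (by omega)]
      simpa using ha
    · have : j = 1 + (j - 1) := by omega
      rw [this, hg2]
      exact hf2A _ (by omega)
  refine ⟨1 + m2 + m3, h, by omega, hh, ?_, ?_, ?_, ?_⟩
  · rw [hh1 0 (by omega), hg1 0 (by omega)]; simp
  · rw [hh2 m3]; exact hf3m
  · intro a' ha'
    obtain ⟨j, hj, hfj⟩ := hf2all a' (hlmem a' ha')
    rcases Nat.lt_or_ge (1 + j) (1 + m2 + m3) with h' | h'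
    · exact ⟨1 + j, h', by rw [hh1 (1 + j) (by omega), hg2 j, hfj]⟩
    · -- then m3 = 0 and j = m2, so a' = a
      have hm3 : m3 = 0 := by omega
      have hj' : j = m2 := by omega
      subst hj'
      rw [hm3] at hf3m
      have haa : a' = a := by rw [← hfj, ← hf3m, hf30]
      subst haa
      exact ⟨0, by omega, by rw [hh1 0 (by omega), hg1 0 (by omega)]; simp⟩
  · intro j hj
    rcases le_or_gt j (1 + m2) with h' | h'
    · rw [hh1 j h']; exact hgA j h'
    · have : j = (1 + m2) + (j - (1 + m2)) := by omega
      rw [this, hh2]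
      exact hf3A _ (by omega)

lemma exists_fair_path (hn : 1 ≤ n) {A : Set (BNState n)} (hA : IsAttractor G A)
    {s : BNState n} (hsub : A ⊆ reach G s) :
    ∃ π : ℕ → BNState n, IsPath G π ∧ Fair G π ∧ π 0 = s ∧
      ∃ p, (∀ t, p ≤ t → π t ∈ A) ∧ (∀ a ∈ A, InfOften π a) := by
  obtain ⟨a, ha⟩ := hA.1
  obtain ⟨p, pre, hpre, hpre0, hprep⟩ := reach_iff_journey.mp (hsub ha)
  obtain ⟨L, f, hL, hf, hf0, hfL, hfall, hfA⟩ := exists_loop hn hA ha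
  set π : ℕ → BNState n := fun t => if t < p then pre t else f ((t - p) % L) with hπdef
  have hπval : ∀ t, p ≤ t → π t = f ((t - p) % L) := by
    intro t ht
    rw [hπdef]
    simp only [if_neg (by omega : ¬ t < p)]
  have hπpre : ∀ t, t < p → π t = pre t := by
    intro t ht
    rw [hπdef]
    simp only [if_pos ht]
  have hπp : π p = a := by
    rw [hπval p le_rfl]
    simp [hf0]
  have hπA : ∀ t, p ≤ t → π t ∈ A := by
    intro t ht
    rw [hπval t ht]
    exact hfA _ (le_of_lt (Nat.mod_lt _ (by omega)))
  have hinf : ∀ a' ∈ A, InfOften π a' := by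
    intro a' ha' N
    obtain ⟨j, hj, hfj⟩ := hfall a' ha'
    refine ⟨p + j + L * (N + 1), by nlinarith, ?_⟩
    rw [hπval _ (by omega)]
    have : p + j + L * (N + 1) - p = j + L * (N + 1) := by omega
    rw [this, Nat.add_mul_mod_self_left, Nat.mod_eq_of_lt hj, hfj]
  have hpath : IsPath G π := by
    intro t
    rcases Nat.lt_or_ge (t + 1) p with h' | h'
    · rw [hπpre t (by omega), hπpre (t + 1) h']
      exact hpre t (by omega)
    · rcases Nat.lt_or_ge t p with h'' | h''
      · -- t + 1 = p
        have htp : t + 1 = p := by omega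
        rw [hπpre t h'', hπval (t + 1) h', htp, Nat.sub_self, Nat.zero_mod, hf0,
          ← hprep, ← htp]
        exact hpre t (by omega)
      · rw [hπval t h'', hπval (t + 1) (by omega)]
        have he : t + 1 - p = (t - p) + 1 := by omega
        rw [he]
        set r := (t - p) % L with hr
        have hrL : r < L := Nat.mod_lt _ (by omega)
        have hmod : (t - p + 1) % L = (r + 1) % L := by
          rw [hr, Nat.mod_add_mod]
        rcases Nat.lt_or_ge (r + 1) L with hc | hc
        · rw [hmod, Nat.mod_eq_of_lt hc]
          exact hf r hrL
        · have hre : r + 1 = L := by omega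
          rw [hmod, hre, Nat.mod_self]
          have hff : f 0 = f (r + 1) := by rw [hre, hf0, hfL]
          rw [hff]
          exact hf r hrL
  have hfair : Fair G π := by
    intro x hx y hstep
    have hxA : x ∈ A := by
      obtain ⟨t, ht, ht2⟩ := hx p
      rw [← ht2]
      exact hπA t ht
    have hyA : y ∈ A := by
      rw [← attractor_reach_eq hA hxA]
      exact Relation.ReflTransGen.single hstep
    exact hinf y hyA
  refine ⟨π, hpath, hfair, ?_, p, hπA, hinf⟩
  rcases Nat.eq_zero_or_pos p with h0 | h0
  · rw [h0] at hπp hprep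
    rw [hπp, ← hprep, hpre0]
  · rw [hπpre 0 h0, hpre0]

end FairCons
section Ctrl
variable {n : ℕ} {O I : Finset (Fin n)} {F : Fin n → BNState n → Bool}

lemma applyControl_mem_ctrlSpace (hOI : Disjoint O I) (s : BNState n) :
    applyControl O I s ∈ ctrlSpace O I := by
  constructor
  · intro i hi
    simp [applyControl, hi]
  · intro i hi
    have hiO : i ∉ O := Finset.disjoint_right.mp hOI hi
    simp [applyControl, hiO, hi]

lemma ctrl_reach {s : BNState n} (hs : s ∈ ctrlSpace O I) {t : BNState n}
    (ht : t ∈ reach (ctrlF O I F) s) : t ∈ ctrlSpace O I ∧ t ∈ reach F s := by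
  induction ht with
  | refl => exact ⟨hs, reach_refl s⟩
  | tail hab hbc ih =>
    rename_i b c
    obtain ⟨hbC, hbR⟩ := ih
    rcases hbc with ⟨i, h1, h2, h3⟩ | ⟨rfl, _⟩
    · by_cases hiO : i ∈ O
      · exfalso
        rw [hbC.1 i hiO] at h2
        rw [h2] at h1
        simp [ctrlF, hiO] at h1
      · by_cases hiI : i ∈ I
        · exfalso
          rw [hbC.2 i hiI] at h2
          rw [h2] at h1
          simp [ctrlF, hiO, hiI] at h1
        · have hF : ctrlF O I F i b = F i b := by simp [ctrlF, hiO, hiI]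
          refine ⟨⟨?_, ?_⟩, Relation.ReflTransGen.tail hbR (Or.inl ⟨i, by rw [← hF]; exact h1, h2, h3⟩)⟩
          · intro j hj
            have hji : j ≠ i := fun h => hiO (h ▸ hj)
            rw [h3 j hji]
            exact hbC.1 j hj
          · intro j hj
            have hji : j ≠ i := fun h => hiI (h ▸ hj)
            rw [h3 j hji]
            exact hbC.2 j hj
    · exact ⟨hbC, hbR⟩

end Ctrl
/-- `C` is a temporary target control for the attractor `At`
iff `bas^S_TS(At) ∩ S|_C ≠ ∅` and `C(S) ⊆ bas^S_{TS|_C}(bas^S_TS(At) ∩ S|_C)`. -/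
theorem ttc_characterisation {n : ℕ} (hn : 1 ≤ n) (F : Fin n → BNState n → Bool)
    (At : Set (BNState n)) (hAt : IsAttractor F At)
    (O I : Finset (Fin n)) (hOI : Disjoint O I) :
    (∀ s : BNState n, ∀ ρ : ℕ → BNState n,
        IsPath (ctrlF O I F) ρ → Fair (ctrlF O I F) ρ → ρ 0 = applyControl O I s →
        ∃ t0 : ℕ, ∀ t, t0 ≤ t →
          ∀ π : ℕ → BNState n, IsPath F π → Fair F π → π 0 = ρ t → ∃ k, π k ∈ At)
    ↔ ((strongBasin F At ∩ ctrlSpace O I).Nonempty ∧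
        Set.range (applyControl O I) ⊆
          strongBasinSet (ctrlF O I F) (ctrlSpace O I)
            (strongBasin F At ∩ ctrlSpace O I)) := by
  set W := strongBasin F At ∩ ctrlSpace O I with hW
  constructor
  · intro P
    have key : ∀ x ∈ Set.range (applyControl O I),
        x ∈ strongBasinSet (ctrlF O I F) (ctrlSpace O I) W := by
      rintro x ⟨s, rfl⟩
      set x := applyControl O I s with hx
      have hxC : x ∈ ctrlSpace O I := applyControl_mem_ctrlSpace hOI s
      have main : ∀ A', IsAttractor (ctrlF O I F) A' →
          (reach (ctrlF O I F) x ∩ A').Nonempty → ∃ y ∈ A', y ∈ W := by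
        rintro A' hA' ⟨w', hw'r, hw'A⟩
        have hsub : A' ⊆ reach (ctrlF O I F) x := by
          rw [← attractor_reach_eq hA' hw'A]
          exact fun u hu => reach_trans hw'r hu
        obtain ⟨ρ, hρpath, hρfair, hρ0, p, hρA, _⟩ := exists_fair_path hn hA' hsub
        obtain ⟨t0, ht0⟩ := P s ρ hρpath hρfair hρ0
        set t := max t0 p with htdef
        set y := ρ t with hy
        have hyA' : y ∈ A' := hρA t (le_max_right _ _)
        have hyC : y ∈ ctrlSpace O I := by
          have : y ∈ reach (ctrlF O I F) x := by
            rw [← hρ0]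
            exact path_reach hρpath (Nat.zero_le t)
          exact (ctrl_reach hxC this).1
        have hPy := ht0 t (le_max_left _ _)
        have h1 : (reach F y ∩ At).Nonempty := by
          obtain ⟨A'', hA'', hsub''⟩ := exists_attractor_reach (G := F) y
          obtain ⟨π, hπp, hπf, hπ0, _⟩ := exists_fair_path hn hA'' hsub''
          obtain ⟨k, hk⟩ := hPy π hπp hπf hπ0
          refine ⟨π k, ?_, hk⟩
          rw [← hπ0]
          exact path_reach hπp (Nat.zero_le k)
        have h2 : ∀ A'', IsAttractor F A'' → A'' ≠ At → reach F y ∩ A'' = ∅ := by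
          intro A'' hA'' hne
          by_contra hcon
          rw [← ne_eq, ← Set.nonempty_iff_ne_empty] at hcon
          obtain ⟨z, hzr, hzA⟩ := hcon
          have hsub'' : A'' ⊆ reach F y := by
            rw [← attractor_reach_eq hA'' hzA]
            exact fun u hu => reach_trans hzr hu
          obtain ⟨π, hπp, hπf, hπ0, q, hπA'', _⟩ := exists_fair_path hn hA'' hsub''
          obtain ⟨k, hk⟩ := hPy π hπp hπf hπ0
          have h3 : π (max k q) ∈ At := by
            rw [← attractor_reach_eq hAt hk]
            exact path_reach hπp (le_max_left _ _)
          exact hne (attractor_eq_of_mem hA'' hAt (hπA'' _ (le_max_right _ _)) h3)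
        exact ⟨y, hyA', ⟨h1, h2⟩, hyC⟩
      refine ⟨hxC, ?_, ?_⟩
      · obtain ⟨A', hA', hsub'⟩ := exists_attractor_reach (G := ctrlF O I F) x
        obtain ⟨a, ha⟩ := hA'.1
        obtain ⟨y, hyA', hyW⟩ := main A' hA' ⟨a, hsub' ha, ha⟩
        exact ⟨y, hsub' hyA', hyW⟩
      · intro A' hA' hAW
        by_contra hcon
        rw [← ne_eq, ← Set.nonempty_iff_ne_empty] at hcon
        obtain ⟨y, hyA', hyW⟩ := main A' hA' hcon
        rw [Set.eq_empty_iff_forall_notMem] at hAW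
        exact hAW y ⟨hyA', hyW⟩
    constructor
    · obtain ⟨x, hx⟩ : ∃ x, x ∈ Set.range (applyControl O I) :=
        ⟨applyControl O I (fun _ => false), ⟨_, rfl⟩⟩
      obtain ⟨_, ⟨y, _, hyW⟩, _⟩ := key x hx
      exact ⟨y, hyW⟩
    · exact key
  · rintro ⟨hWne, hrange⟩ s ρ hρp hρf hρ0
    have hxB := hrange ⟨s, hρ0.symm⟩
    obtain ⟨A', N, hA', hevt, hsubx⟩ := fair_path_attractor hρp hρf
    have hAW : (A' ∩ W).Nonempty := by
      by_contra h
      rw [Set.not_nonempty_iff_eq_empty] at h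
      have hemp := hxB.2.2 A' hA' h
      obtain ⟨a, ha⟩ := hA'.1
      rw [Set.eq_empty_iff_forall_notMem] at hemp
      exact hemp a ⟨hsubx ha, ha⟩
    obtain ⟨w, hwA', hwW⟩ := hAW
    refine ⟨N, fun t ht π hπp hπf hπ0 => ?_⟩
    have hyA' : ρ t ∈ A' := hevt t ht
    have hwC : w ∈ ctrlSpace O I := hwW.2
    have hyw : ρ t ∈ reach F w := by
      have : ρ t ∈ reach (ctrlF O I F) w := by
        rw [attractor_reach_eq hA' hwA']
        exact hyA'
      exact (ctrl_reach hwC this).2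
    obtain ⟨A'', N'', hA''attr, hevt'', hsub''⟩ := fair_path_attractor hπp hπf
    have hsubw : A'' ⊆ reach F w := by
      intro z hz
      have hz' : z ∈ reach F (ρ t) := by
        rw [← hπ0]
        exact hsub'' hz
      exact reach_trans hyw hz'
    have hAAt : A'' = At := by
      by_contra hne
      have hemp := hwW.1.2 A'' hA''attr hne
      obtain ⟨a, ha⟩ := hA''attr.1
      rw [Set.eq_empty_iff_forall_notMem] at hemp
      exact hemp a ⟨hsubw ha, ha⟩
    exact ⟨N'', hAAt ▸ hevt'' N'' le_rfl⟩
end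

section
/- Let A_t be an attractor of the asynchronous transition system TS of a Boolean network BN. If C = (𝕆,𝟙) is a temporary target control for A_t (i.e., for every state s ∈ S and every fair infinite path ρ = ρ_0 → ρ_1 → … of TS|_C starting from ρ_0 = C(s), there exists t_0 ≥ 0 such that for all t ≥ t_0, every fair infinite path of TS starting from ρ_t eventually reaches a state of A_t), then every intermediate state lies in the weak basin of A_t in TS: C(S) ⊆ bas^W_{TS}(A_t). -/
open Classical in
/-- There is a `G`-path of length `L` from `a` to `b`. -/
def PathLen {α : Type*} (G : α → α → Prop) (L : ℕ) (a b : α) : Prop :=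
  ∃ q : ℕ → α, q 0 = a ∧ (∀ k, L ≤ k → q k = b) ∧ ∀ k < L, G (q k) (q (k + 1))

theorem reflTransGen_iff_pathLen {α : Type*} {G : α → α → Prop} {a b : α} :
    Relation.ReflTransGen G a b ↔ ∃ L, PathLen G L a b := by
  constructor
  · intro h
    induction h using Relation.ReflTransGen.head_induction_on with
    | refl => exact ⟨0, fun _ => b, rfl, fun _ _ => rfl, fun k hk => absurd hk (Nat.not_lt_zero k)⟩
    | @head a' c hac hcb ih =>
      obtain ⟨L, q, hq0, hqL, hqs⟩ := ih
      refine ⟨L + 1, fun k => if k = 0 then a' else q (k - 1), by simp, ?_, ?_⟩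
      · intro k hk
        have hk0 : k ≠ 0 := by omega
        simp only [hk0, if_false]
        exact hqL _ (by omega)
      · intro k hk
        rcases Nat.eq_zero_or_pos k with h0 | h0
        · subst h0; simpa [hq0] using hac
        · have hk0 : k ≠ 0 := by omega
          have hk1 : k + 1 ≠ 0 := by omega
          simp only [hk0, hk1, if_false, Nat.add_sub_cancel]
          have := hqs (k - 1) (by omega)
          have hke : k - 1 + 1 = k := by omega
          rwa [hke] at this
  · rintro ⟨L, hL⟩
    induction L generalizing a with
    | zero =>
      obtain ⟨q, hq0, hqL, _⟩ := hL
      have : a = b := by rw [← hq0, hqL 0 le_rfl]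
      exact this ▸ Relation.ReflTransGen.refl
    | succ L ih =>
      obtain ⟨q, hq0, hqL, hqs⟩ := hL
      have hstep : G a (q 1) := hq0 ▸ hqs 0 (Nat.succ_pos L)
      have : PathLen G L (q 1) b :=
        ⟨fun k => q (k + 1), rfl, fun k hk => hqL _ (by omega),
          fun k hk => hqs (k + 1) (by omega)⟩
      exact Relation.ReflTransGen.head hstep (ih this)

open Classical in
/-- Distance from `a` to `b` along `G` (junk value if unreachable). -/
noncomputable def distG {α : Type*} (G : α → α → Prop) (a b : α) : ℕ :=
  if h : ∃ L, PathLen G L a b then Nat.find h else 0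

open Classical in
theorem distG_spec {α : Type*} {G : α → α → Prop} {a b : α}
    (h : Relation.ReflTransGen G a b) : PathLen G (distG G a b) a b := by
  have h' := reflTransGen_iff_pathLen.mp h
  rw [distG, dif_pos h']
  exact Nat.find_spec h'

open Classical in
theorem distG_min {α : Type*} {G : α → α → Prop} {a b : α} {L : ℕ}
    (h : PathLen G L a b) : distG G a b ≤ L := by
  have h' : ∃ L, PathLen G L a b := ⟨L, h⟩
  rw [distG, dif_pos h']
  exact Nat.find_min' h' h

theorem step_toward {α : Type*} {G : α → α → Prop} {a b : α}
    (h : Relation.ReflTransGen G a b) (hne : a ≠ b) :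
    ∃ c, G a c ∧ Relation.ReflTransGen G c b ∧ distG G c b < distG G a b := by
  obtain ⟨q, hq0, hqL, hqs⟩ := distG_spec h
  have hd : distG G a b ≠ 0 := by
    intro h0
    exact hne (by rw [← hq0, hqL 0 (by omega)])
  obtain ⟨e, he⟩ := Nat.exists_eq_succ_of_ne_zero hd
  have hstep : G a (q 1) := hq0 ▸ hqs 0 (by omega)
  have hp : PathLen G e (q 1) b :=
    ⟨fun k => q (k + 1), rfl, fun k hk => hqL _ (by omega), fun k hk => hqs (k + 1) (by omega)⟩
  exact ⟨q 1, hstep, reflTransGen_iff_pathLen.mpr ⟨e, hp⟩,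
    lt_of_le_of_lt (distG_min hp) (by omega)⟩

open Classical in
noncomputable def nxt {α : Type*} (G : α → α → Prop) (htot : ∀ s, ∃ t, G s t) (a b : α) : α :=
  if h : Relation.ReflTransGen G a b ∧ a ≠ b then (step_toward h.1 h.2).choose
  else (htot a).choose

open Classical in
theorem nxt_G {α : Type*} (G : α → α → Prop) (htot : ∀ s, ∃ t, G s t) (a b : α) :
    G a (nxt G htot a b) := by
  rw [nxt]
  split
  · next h => exact (step_toward h.1 h.2).choose_spec.1
  · exact (htot a).choose_spec

open Classical in
theorem nxt_lt {α : Type*} (G : α → α → Prop) (htot : ∀ s, ∃ t, G s t) {a b : α}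
    (h : Relation.ReflTransGen G a b) (hne : a ≠ b) :
    distG G (nxt G htot a b) b < distG G a b := by
  rw [nxt, dif_pos ⟨h, hne⟩]
  exact (step_toward h hne).choose_spec.2.2

open Classical in
noncomputable def schedStep {α : Type*} (G : α → α → Prop) (htot : ∀ s, ∃ t, G s t)
    (tgt : ℕ → α) (p : α × ℕ) : α × ℕ :=
  (nxt G htot p.1 (tgt (if p.1 = tgt p.2 then p.2 + 1 else p.2)),
   if p.1 = tgt p.2 then p.2 + 1 else p.2)

theorem exists_fair_path_s13 {α : Type*} [Fintype α] (G : α → α → Prop)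
    (htot : ∀ s, ∃ t, G s t) (x : α) :
    ∃ π : ℕ → α, (∀ k, G (π k) (π (k + 1))) ∧
      (∀ u, (∀ N, ∃ k, N ≤ k ∧ π k = u) → ∀ v, G u v → (∀ N, ∃ k, N ≤ k ∧ π k = v)) ∧
      π 0 = x := by
  classical
  set R := Relation.ReflTransGen G with hR
  set Rset : α → Finset α := fun a => Finset.univ.filter (R a) with hRset
  have mem_Rset : ∀ a b : α, b ∈ Rset a ↔ R a b := by
    intro a b; simp [hRset]
  have hx : x ∈ Rset x := (mem_Rset x x).mpr Relation.ReflTransGen.refl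
  obtain ⟨s, hs, hmin⟩ :=
    Finset.exists_min_image (Rset x) (fun a => (Rset a).card) ⟨x, hx⟩
  have hRxs : R x s := (mem_Rset x s).mp hs
  have key : ∀ t ∈ Rset s, Rset t = Rset s := by
    intro t ht
    have hst : R s t := (mem_Rset s t).mp ht
    have hsub : Rset t ⊆ Rset s := by
      intro u hu
      exact (mem_Rset s u).mpr (hst.trans ((mem_Rset t u).mp hu))
    have hxt : t ∈ Rset x := (mem_Rset x t).mpr (hRxs.trans hst)
    exact Finset.eq_of_subset_of_card_le hsub (hmin t hxt)
  have closed : ∀ t ∈ Rset s, ∀ v, G t v → v ∈ Rset s := by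
    intro t ht v hv
    rw [← key t ht]
    exact (mem_Rset t v).mpr (Relation.ReflTransGen.single hv)
  have mutual' : ∀ t ∈ Rset s, ∀ u ∈ Rset s, R t u := by
    intro t ht u hu
    exact (mem_Rset t u).mp (by rwa [key t ht])
  -- the cyclic list of targets
  set l : List α := (Rset s).toList with hl
  have hsl : s ∈ l := by rw [hl]; exact Finset.mem_toList.mpr ((mem_Rset s s).mpr .refl)
  set m : ℕ := l.length with hm
  have hm0 : 0 < m := List.length_pos_iff.mpr (List.ne_nil_of_mem hsl)
  set tgt : ℕ → α := fun j => l.get ⟨j % m, Nat.mod_lt _ hm0⟩ with htgt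
  have tgt_mem : ∀ j, tgt j ∈ Rset s := by
    intro j
    rw [htgt, ← Finset.mem_toList]
    exact List.get_mem l _
  have mem_tgt : ∀ a ∈ Rset s, ∀ N, ∃ j, N ≤ j ∧ tgt j = a := by
    intro a ha N
    obtain ⟨⟨i, hi⟩, hia⟩ := List.mem_iff_get.mp (Finset.mem_toList.mpr ha)
    refine ⟨i + m * N, by nlinarith, ?_⟩
    rw [htgt]
    have : (i + m * N) % m = i := by
      rw [Nat.add_mul_mod_self_left, Nat.mod_eq_of_lt hi]
    simp only [this]
    exact hia
  -- the scheduled path inside the attractor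
  set Φ : α × ℕ → α × ℕ := schedStep G htot tgt with hΦ
  set σ : ℕ → α × ℕ := fun k => Φ^[k] (s, 0) with hσ
  have hσ0 : σ 0 = (s, 0) := rfl
  have hσs : ∀ k, σ (k + 1) = Φ (σ k) := by
    intro k; rw [hσ]; exact Function.iterate_succ_apply' Φ k (s, 0)
  have cnt_succ : ∀ k, (σ (k + 1)).2 =
      if (σ k).1 = tgt (σ k).2 then (σ k).2 + 1 else (σ k).2 := by
    intro k; rw [hσs k]; rfl
  have fst_succ : ∀ k, (σ (k + 1)).1 = nxt G htot (σ k).1 (tgt ((σ (k + 1)).2)) := by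
    intro k; rw [hσs k]; rfl
  have stepσ : ∀ k, G (σ k).1 (σ (k + 1)).1 := by
    intro k; rw [fst_succ k]; exact nxt_G G htot _ _
  have inA : ∀ k, (σ k).1 ∈ Rset s := by
    intro k
    induction k with
    | zero => rw [hσ0]; exact (mem_Rset s s).mpr .refl
    | succ k ih => exact closed _ ih _ (stepσ k)
  have cnt_mono : ∀ k, (σ k).2 ≤ (σ (k + 1)).2 ∧ (σ (k + 1)).2 ≤ (σ k).2 + 1 := by
    intro k
    rw [cnt_succ k]
    split <;> omega
  have cnt_le : ∀ k, (σ k).2 ≤ k := by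
    intro k
    induction k with
    | zero => rw [hσ0]
    | succ k ih => have := cnt_mono k; omega
  -- progress of the counter
  have progress : ∀ k, ∃ k', k < k' ∧ (σ k).2 < (σ k').2 := by
    have H : ∀ d k, distG G (σ k).1 (tgt (σ k).2) = d → ∃ k', k < k' ∧ (σ k).2 < (σ k').2 := by
      intro d
      induction d using Nat.strong_induction_on with
      | _ d ih =>
        intro k hd
        by_cases h : (σ k).1 = tgt (σ k).2
        · refine ⟨k + 1, Nat.lt_succ_self k, ?_⟩
          rw [cnt_succ k, if_pos h]
          omega
        · have hc : (σ (k + 1)).2 = (σ k).2 := by rw [cnt_succ k, if_neg h]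
          have hRst : R (σ k).1 (tgt (σ k).2) := mutual' _ (inA k) _ (tgt_mem _)
          have hlt : distG G (σ (k + 1)).1 (tgt ((σ (k + 1)).2)) < d := by
            rw [hc, ← hd, fst_succ k, hc]
            exact nxt_lt G htot hRst h
          obtain ⟨k', hk', hck'⟩ := ih _ hlt (k + 1) rfl
          exact ⟨k', by omega, by omega⟩
    intro k
    exact H _ k rfl
  have unbounded : ∀ N, ∃ k, N ≤ (σ k).2 := by
    intro N
    induction N with
    | zero => exact ⟨0, Nat.zero_le _⟩
    | succ N ih =>
      obtain ⟨k, hk⟩ := ih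
      obtain ⟨k', _, hk'⟩ := progress k
      exact ⟨k', by omega⟩
  have attains : ∀ j, ∃ k, (σ k).2 = j := by
    have P : ∀ K, ∀ j ≤ (σ K).2, ∃ k, (σ k).2 = j := by
      intro K
      induction K with
      | zero => intro j hj; rw [hσ0] at hj; exact ⟨0, by rw [hσ0]; omega⟩
      | succ K ih =>
        intro j hj
        by_cases h : j ≤ (σ K).2
        · exact ih j h
        · have := cnt_mono K
          exact ⟨K + 1, by omega⟩
    intro j
    obtain ⟨K, hK⟩ := unbounded j
    exact P K j hK
  have visits : ∀ a ∈ Rset s, ∀ N, ∃ k, N ≤ k ∧ (σ k).1 = a := by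
    intro a ha N
    obtain ⟨j, hjN, hja⟩ := mem_tgt a ha N
    have hex : ∃ k, (σ k).2 = j + 1 := attains (j + 1)
    have hkspec : (σ (Nat.find hex)).2 = j + 1 := Nat.find_spec hex
    have hk0 : Nat.find hex ≠ 0 := by
      intro h0
      rw [h0, hσ0] at hkspec
      omega
    obtain ⟨k0, hkk⟩ := Nat.exists_eq_succ_of_ne_zero hk0
    rw [hkk, Nat.succ_eq_add_one] at hkspec
    have hnk0 : (σ k0).2 ≠ j + 1 := Nat.find_min hex (by omega)
    have hmono := cnt_mono k0
    have hck0 : (σ k0).2 = j := by omega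
    have hcond : (σ k0).1 = tgt (σ k0).2 := by
      by_contra hco
      rw [cnt_succ k0, if_neg hco] at hkspec
      omega
    refine ⟨k0, ?_, ?_⟩
    · have := cnt_le k0; omega
    · rw [hcond, hck0, hja]
  -- prepend a finite path from x to s
  obtain ⟨L, q, hq0, hqL, hqs⟩ := reflTransGen_iff_pathLen.mp hRxs
  set π : ℕ → α := fun k => if k < L then q k else (σ (k - L)).1 with hπ
  have hπ0 : π 0 = x := by
    rw [hπ]
    by_cases h : 0 < L
    · simp [h, hq0]
    · have hL0 : L = 0 := by omega
      have : q 0 = s := hqL 0 (by omega)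
      simp [hL0, hσ0, ← this, hq0]
  have hπs : ∀ k, G (π k) (π (k + 1)) := by
    intro k
    rw [hπ]
    by_cases h1 : k + 1 < L
    · have h2 : k < L := by omega
      simp only [h1, h2, if_pos]
      exact hqs k h2
    · by_cases h2 : k < L
      · have hkL : k + 1 = L := by omega
        simp only [h1, h2, if_pos, if_neg (by omega : ¬ k + 1 < L)]
        have : q (k + 1) = s := hqL (k + 1) (by omega)
        have hG := hqs k h2
        rw [this] at hG
        simpa [hkL, hσ0] using hG
      · simp only [if_neg h1, if_neg h2]
        have he : k + 1 - L = (k - L) + 1 := by omega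
        rw [he]
        exact stepσ (k - L)
  have hπfair : ∀ u, (∀ N, ∃ k, N ≤ k ∧ π k = u) → ∀ v, G u v →
      (∀ N, ∃ k, N ≤ k ∧ π k = v) := by
    intro u hu v huv N
    obtain ⟨k, hkL, hku⟩ := hu L
    have huA : u ∈ Rset s := by
      rw [hπ] at hku
      simp only [if_neg (by omega : ¬ k < L)] at hku
      rw [← hku]
      exact inA _
    have hvA : v ∈ Rset s := closed u huA v huv
    obtain ⟨k', hk'N, hk'v⟩ := visits v hvA N
    refine ⟨k' + L, by omega, ?_⟩
    rw [hπ]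
    simp only [if_neg (by omega : ¬ k' + L < L), Nat.add_sub_cancel]
    exact hk'v
  exact ⟨π, hπs, hπfair, hπ0⟩




theorem step_total {n : ℕ} (hn : 1 ≤ n) (F : Fin n → BNState n → Bool) (s : BNState n) :
    ∃ t, Step F s t := by
  set i0 : Fin n := ⟨0, hn⟩ with hi0
  by_cases h : F i0 s = s i0
  · exact ⟨s, Or.inr ⟨rfl, i0, h⟩⟩
  · have hb : F i0 s = !(s i0) := by
      cases hx : s i0 <;> cases hy : F i0 s <;> simp_all
    refine ⟨Function.update s i0 (F i0 s), Or.inl ⟨i0, ?_, ?_, ?_⟩⟩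
    · simp
    · simp [hb]
    · intro j hj
      simp [Function.update_of_ne hj]

theorem ctrl_step {n : ℕ} (O I : Finset (Fin n)) (F : Fin n → BNState n → Bool)
    {c c' : BNState n} (hc : c ∈ ctrlSpace O I) (h : Step (ctrlF O I F) c c') :
    c' ∈ ctrlSpace O I ∧ Relation.ReflTransGen (Step F) c c' := by
  rcases h with ⟨i, h1, h2, h3⟩ | ⟨rfl, _⟩
  · by_cases hiO : i ∈ O
    · exfalso
      have hci : c i = false := hc.1 i hiO
      rw [ctrlF, if_pos hiO] at h1
      rw [h1] at h2
      rw [hci] at h2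
      simp at h2
    · by_cases hiI : i ∈ I
      · exfalso
        have hci : c i = true := hc.2 i hiI
        rw [ctrlF, if_neg hiO, if_pos hiI] at h1
        rw [h1] at h2
        rw [hci] at h2
        simp at h2
      · have h1' : c' i = F i c := by rwa [ctrlF, if_neg hiO, if_neg hiI] at h1
        refine ⟨⟨?_, ?_⟩, Relation.ReflTransGen.single (Or.inl ⟨i, h1', h2, h3⟩)⟩
        · intro j hj
          rw [h3 j (by rintro rfl; exact hiO hj)]
          exact hc.1 j hj
        · intro j hj
          rw [h3 j (by rintro rfl; exact hiI hj)]
          exact hc.2 j hj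
  · exact ⟨hc, Relation.ReflTransGen.refl⟩

/-- if `C` is a temporary target control for `At`, then every
intermediate state lies in the weak basin of `At` in `TS`. -/
theorem ttc_implies_weakBasin {n : ℕ} (hn : 1 ≤ n)
    (F : Fin n → BNState n → Bool) (At : Set (BNState n)) (hAt : IsAttractor F At)
    (O I : Finset (Fin n)) (hOI : Disjoint O I)
    (httc : ∀ s : BNState n, ∀ ρ : ℕ → BNState n,
        IsPath (ctrlF O I F) ρ → Fair (ctrlF O I F) ρ → ρ 0 = applyControl O I s →
        ∃ t0 : ℕ, ∀ t, t0 ≤ t →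
          ∀ π : ℕ → BNState n, IsPath F π → Fair F π → π 0 = ρ t → ∃ k, π k ∈ At) :
    Set.range (applyControl O I) ⊆ weakBasin F At := by
  rintro y ⟨s, rfl⟩
  have hyC : applyControl O I s ∈ ctrlSpace O I := by
    constructor
    · intro i hiO
      simp [applyControl, hiO]
    · intro i hiI
      have hiO : i ∉ O := fun h => (Finset.disjoint_left.mp hOI h) hiI
      simp [applyControl, hiO, hiI]
  obtain ⟨ρ, hρpath, hρfair, hρ0⟩ :=
    exists_fair_path_s13 (Step (ctrlF O I F)) (step_total hn _) (applyControl O I s)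
  obtain ⟨t0, ht0⟩ := httc s ρ hρpath hρfair hρ0
  obtain ⟨π, hπpath, hπfair, hπ0⟩ :=
    exists_fair_path_s13 (Step F) (step_total hn F) (ρ t0)
  obtain ⟨k, hk⟩ := ht0 t0 le_rfl π hπpath hπfair hπ0
  have hreachρ : ∀ t, ρ t ∈ ctrlSpace O I ∧
      Relation.ReflTransGen (Step F) (applyControl O I s) (ρ t) := by
    intro t
    induction t with
    | zero => rw [hρ0]; exact ⟨hyC, Relation.ReflTransGen.refl⟩
    | succ t ih =>
      obtain ⟨h1, h2⟩ := ih
      obtain ⟨h3, h4⟩ := ctrl_step O I F h1 (hρpath t)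
      exact ⟨h3, h2.trans h4⟩
  have hreachπ : ∀ j, Relation.ReflTransGen (Step F) (ρ t0) (π j) := by
    intro j
    induction j with
    | zero => rw [hπ0]
    | succ j ih => exact ih.trans (Relation.ReflTransGen.single (hπpath j))
  exact ⟨π k, (hreachρ t0).2.trans (hreachπ k), hk⟩
end
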